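/- Let G be a connected undirected graph on n vertices with nonnegative edge weights, L its Laplacian, and D a nonzero diagonal matrix with entries in {0,1} (at least one entry equal to 1). Then the smallest eigenvalue of L + D is a simple eigenvalue and its corresponding eigenvector can be chosen to have all entries strictly positive. -/

import Mathlib

open Matrix

def lapW {n : ℕ} (W : Matrix (Fin n) (Fin n) ℝ) : Matrix (Fin n) (Fin n) ℝ :=
  Matrix.diagonal (fun i => ∑ j, W i j) - W

def connectedW {n : ℕ} (W : Matrix (Fin n) (Fin n) ℝ) : Prop :=
  ∀ i j : Fin n, Relation.ReflTransGen (fun a b => W a b ≠ 0) i j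

section Aux
variable {n : ℕ}

lemma pf_quad_eq (W : Matrix (Fin n) (Fin n) ℝ) (c : Fin n → ℝ) (x : Fin n → ℝ) :
    x ⬝ᵥ ((Matrix.diagonal c - W) *ᵥ x)
      = (∑ i, c i * x i ^ 2) - ∑ i, ∑ j, W i j * (x i * x j) := by
  rw [dotProduct, ← Finset.sum_sub_distrib]
  refine Finset.sum_congr rfl fun i _ => ?_
  rw [sub_mulVec, Pi.sub_apply, mulVec_diagonal, mulVec, dotProduct, mul_sub, Finset.mul_sum]
  congr 1
  · ring
  · exact Finset.sum_congr rfl fun j _ => by ring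

lemma pf_Mform (W : Matrix (Fin n) (Fin n) ℝ) (d : Fin n → ℝ) :
    lapW W + Matrix.diagonal d
      = Matrix.diagonal (fun i => (∑ j, W i j) + d i) - W := by
  ext i j
  rcases eq_or_ne i j with rfl | hne
  · simp [lapW, Matrix.add_apply, Matrix.sub_apply, Matrix.diagonal_apply_eq]; ring
  · simp [lapW, Matrix.add_apply, Matrix.sub_apply, Matrix.diagonal_apply_ne _ hne]

lemma pf_quad_abs (W : Matrix (Fin n) (Fin n) ℝ) (hnonneg : ∀ i j, 0 ≤ W i j)
    (c : Fin n → ℝ) (x : Fin n → ℝ) :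
    (fun i => |x i|) ⬝ᵥ ((Matrix.diagonal c - W) *ᵥ (fun i => |x i|))
      ≤ x ⬝ᵥ ((Matrix.diagonal c - W) *ᵥ x) := by
  rw [pf_quad_eq, pf_quad_eq]
  have h1 : ∀ i : Fin n, c i * |x i| ^ 2 = c i * x i ^ 2 := fun i => by rw [sq_abs]
  simp_rw [h1]
  apply sub_le_sub_left
  refine Finset.sum_le_sum fun i _ => Finset.sum_le_sum fun j _ => ?_
  refine mul_le_mul_of_nonneg_left ?_ (hnonneg i j)
  calc x i * x j ≤ |x i * x j| := le_abs_self _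
    _ = |x i| * |x j| := abs_mul _ _

lemma pf_herm (W : Matrix (Fin n) (Fin n) ℝ) (hsym : W.IsSymm) (c : Fin n → ℝ) (μ : ℝ) :
    (Matrix.diagonal c - W - μ • (1 : Matrix (Fin n) (Fin n) ℝ)).IsHermitian := by
  have hW : W.IsHermitian := by
    rw [Matrix.IsHermitian, conjTranspose_eq_transpose_of_trivial]; exact hsym
  have h1 : (μ • (1 : Matrix (Fin n) (Fin n) ℝ)).IsHermitian := by
    rw [Matrix.IsHermitian, Matrix.conjTranspose_smul, star_trivial, Matrix.conjTranspose_one]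
  exact ((Matrix.isHermitian_diagonal c).sub hW).sub h1

end Aux

section Aux2
variable {n : ℕ}

lemma pf_propagate (W : Matrix (Fin n) (Fin n) ℝ) (hnonneg : ∀ i j, 0 ≤ W i j)
    (hconn : connectedW W) (c : Fin n → ℝ) (μ : ℝ) (z : Fin n → ℝ)
    (hz : (Matrix.diagonal c - W) *ᵥ z = μ • z) (hznn : ∀ i, 0 ≤ z i)
    (i : Fin n) (hzi : z i = 0) : z = 0 := by
  have step : ∀ a b : Fin n, z a = 0 → W a b ≠ 0 → z b = 0 := by
    intro a b ha hab
    have h1 : c a * z a - ∑ j, W a j * z j = μ * z a := by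
      have h0 := congrFun hz a
      rw [sub_mulVec, Pi.sub_apply, mulVec_diagonal] at h0
      simpa [mulVec, dotProduct] using h0
    rw [ha, mul_zero, mul_zero, zero_sub, neg_eq_zero] at h1
    have h2 : ∀ j ∈ Finset.univ, (0:ℝ) ≤ W a j * z j :=
      fun j _ => mul_nonneg (hnonneg a j) (hznn j)
    have h3 := (Finset.sum_eq_zero_iff_of_nonneg h2).mp h1 b (Finset.mem_univ b)
    rcases mul_eq_zero.mp h3 with h | h
    · exact absurd h hab
    · exact h
  funext j
  show z j = 0
  have h := hconn i j
  induction h with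
  | refl => exact hzi
  | tail _ hedge ih => exact step _ _ ih hedge

end Aux2


/-- for a connected weighted graph and a 0/1 diagonal perturbation
with at least one 1, the smallest eigenvalue of `L + D` is simple and possesses
an entrywise strictly positive eigenvector. -/
theorem smallest_eigenvalue_simple_positive_eigenvector
    {n : ℕ} (hn : 0 < n) (W : Matrix (Fin n) (Fin n) ℝ)
    (hsym : W.IsSymm) (hnonneg : ∀ i j, 0 ≤ W i j)
    (hconn : connectedW W)
    (d : Fin n → ℝ) (hd : ∀ i, d i = 0 ∨ d i = 1) (hdpos : ∃ i, d i = 1) :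
    ∃ (μ : ℝ) (v : Fin n → ℝ),
      -- v is an eigenvector of L + D for the eigenvalue μ
      (lapW W + Matrix.diagonal d).mulVec v = μ • v ∧
      -- v is entrywise strictly positive
      (∀ i, 0 < v i) ∧
      -- μ is the smallest eigenvalue
      (∀ (μ' : ℝ) (w : Fin n → ℝ), w ≠ 0 →
        (lapW W + Matrix.diagonal d).mulVec w = μ' • w → μ ≤ μ') ∧
      -- μ is a simple eigenvalue: its eigenspace is one-dimensional
      (∀ w : Fin n → ℝ,
        (lapW W + Matrix.diagonal d).mulVec w = μ • w → ∃ c : ℝ, w = c • v) := by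
  have i0 : Fin n := ⟨0, hn⟩
  set c : Fin n → ℝ := fun i => (∑ j, W i j) + d i with hc
  have hM : lapW W + Matrix.diagonal d = Matrix.diagonal c - W := pf_Mform W d
  rw [hM]
  set M : Matrix (Fin n) (Fin n) ℝ := Matrix.diagonal c - W with hMdef
  set q : (Fin n → ℝ) → ℝ := fun x => x ⬝ᵥ (M *ᵥ x) with hqdef
  -- continuity
  have hcont : Continuous q := by
    show Continuous fun x : Fin n → ℝ => ∑ i, x i * ∑ j, M i j * x j
    exact continuous_finset_sum _ fun i _ => (continuous_apply i).mul
      (continuous_finset_sum _ fun j _ => continuous_const.mul (continuous_apply j))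
  have hdotcont : Continuous fun x : Fin n → ℝ => x ⬝ᵥ x := by
    show Continuous fun x : Fin n → ℝ => ∑ i, x i * x i
    exact continuous_finset_sum _ fun i _ => (continuous_apply i).mul (continuous_apply i)
  -- the sphere
  set S : Set (Fin n → ℝ) := {x | x ⬝ᵥ x = 1} with hSdef
  have hSne : S.Nonempty := by
    refine ⟨Pi.single i0 1, ?_⟩
    simp [hSdef, dotProduct, Pi.single_apply]
  have hSclosed : IsClosed S := isClosed_eq hdotcont continuous_const
  have hSsub : S ⊆ Metric.closedBall 0 1 := by
    intro x hx
    rw [Metric.mem_closedBall, dist_zero_right]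
    rw [pi_norm_le_iff_of_nonneg zero_le_one]
    intro i
    rw [Real.norm_eq_abs, abs_le_one_iff_mul_self_le_one]
    calc x i * x i ≤ ∑ j, x j * x j :=
          Finset.single_le_sum (f := fun j => x j * x j)
            (fun j _ => mul_self_nonneg _) (Finset.mem_univ i)
      _ = 1 := hx
  have hScompact : IsCompact S :=
    (isCompact_closedBall (0 : Fin n → ℝ) 1).of_isClosed_subset hSclosed hSsub
  obtain ⟨x₀, hx₀S, hx₀min⟩ := hScompact.exists_isMinOn hSne hcont.continuousOn
  set μ : ℝ := q x₀ with hμdef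
  have hmin : ∀ y ∈ S, μ ≤ q y := fun y hy => hx₀min hy
  -- global lower bound
  have hlow : ∀ z : Fin n → ℝ, μ * (z ⬝ᵥ z) ≤ q z := by
    intro z
    by_cases hz : z = 0
    · subst hz; simp [hqdef]
    · have hzz : 0 < z ⬝ᵥ z := by
        rcases lt_or_eq_of_le (Finset.sum_nonneg fun j _ => mul_self_nonneg (z j)) with h | h
        · exact h
        · exact absurd (dotProduct_self_eq_zero.mp h.symm) hz
      set t : ℝ := Real.sqrt (z ⬝ᵥ z) with htdef
      have htpos : 0 < t := Real.sqrt_pos.mpr hzz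
      have ht2 : t ^ 2 = z ⬝ᵥ z := Real.sq_sqrt hzz.le
      have hyS : (t⁻¹ • z) ∈ S := by
        show (t⁻¹ • z) ⬝ᵥ (t⁻¹ • z) = 1
        rw [smul_dotProduct, dotProduct_smul, smul_eq_mul, smul_eq_mul, ← ht2, pow_two]
        field_simp
      have h1 := hmin _ hyS
      have h2 : q (t⁻¹ • z) = t⁻¹ * (t⁻¹ * q z) := by
        show (t⁻¹ • z) ⬝ᵥ (M *ᵥ (t⁻¹ • z)) = _
        rw [mulVec_smul, smul_dotProduct, dotProduct_smul, smul_eq_mul, smul_eq_mul]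
      rw [h2] at h1
      have ht2' : t⁻¹ * t⁻¹ = (z ⬝ᵥ z)⁻¹ := by
        rw [← mul_inv, ← ht2]; ring_nf
      rw [← mul_assoc, ht2'] at h1
      rw [← le_div_iff₀ hzz, div_eq_inv_mul]
      exact h1
  -- positive semidefiniteness of M - μ • 1
  have hpsd : (M - μ • (1 : Matrix (Fin n) (Fin n) ℝ)).PosSemidef := by
    refine Matrix.PosSemidef.of_dotProduct_mulVec_nonneg ?_ ?_
    · exact pf_herm W hsym c μ
    · intro x
      have h1 : (M - μ • 1) *ᵥ x = M *ᵥ x - μ • x := by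
        rw [sub_mulVec, smul_mulVec, one_mulVec]
      rw [star_trivial, h1, dotProduct_sub, dotProduct_smul, smul_eq_mul]
      have := hlow x
      simp only [hqdef] at this ⊢
      linarith
  -- eigenvector extraction from equality in the Rayleigh bound
  have heig : ∀ z : Fin n → ℝ, q z = μ * (z ⬝ᵥ z) → M *ᵥ z = μ • z := by
    intro z hz
    have h0 : star z ⬝ᵥ ((M - μ • 1) *ᵥ z) = 0 := by
      rw [star_trivial, sub_mulVec, smul_mulVec, one_mulVec, dotProduct_sub,
        dotProduct_smul, smul_eq_mul]
      simp only [hqdef] at hz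
      linarith [hz]
    have h1 := (hpsd.dotProduct_mulVec_zero_iff z).mp h0
    rw [sub_mulVec, smul_mulVec, one_mulVec, sub_eq_zero] at h1
    exact h1
  -- v = |x₀|
  set v : Fin n → ℝ := fun i => |x₀ i| with hvdef
  have hvv : v ⬝ᵥ v = 1 := by
    show (∑ i, |x₀ i| * |x₀ i|) = 1
    simp_rw [abs_mul_abs_self]
    exact hx₀S
  have hqv : q v = μ := le_antisymm (pf_quad_abs W hnonneg c x₀) (hmin v hvv)
  have hveig : M *ᵥ v = μ • v := heig v (by rw [hqv, hvv, mul_one])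
  have hvnn : ∀ i, 0 ≤ v i := fun i => abs_nonneg _
  have hvne : v ≠ 0 := by
    intro h
    rw [h] at hvv
    simp [dotProduct] at hvv
  -- positivity of nonnegative eigenvectors
  have hposall : ∀ z : Fin n → ℝ, M *ᵥ z = μ • z → (∀ i, 0 ≤ z i) → z ≠ 0 →
      ∀ i, 0 < z i := by
    intro z hz hznn hzne i
    rcases lt_or_eq_of_le (hznn i) with h | h
    · exact h
    · exact absurd (pf_propagate W hnonneg hconn c μ z hz hznn i h.symm) hzne
  have hvpos : ∀ i, 0 < v i := hposall v hveig hvnn hvne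
  -- nonnegative eigenvectors are multiples of v
  have hratio : ∀ w : Fin n → ℝ, M *ᵥ w = μ • w → (∀ i, 0 ≤ w i) →
      ∃ cc : ℝ, w = cc • v := by
    intro w hw hwnn
    by_cases hw0 : w = 0
    · exact ⟨0, by rw [hw0, zero_smul]⟩
    have hwpos := hposall w hw hwnn hw0
    have hune : (Finset.univ : Finset (Fin n)).Nonempty := ⟨i0, Finset.mem_univ i0⟩
    obtain ⟨i₁, _, hi₁⟩ := Finset.exists_mem_eq_inf' hune (fun i => w i / v i)
    have hcle : ∀ i : Fin n, w i₁ / v i₁ ≤ w i / v i := fun i =>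
      hi₁ ▸ Finset.inf'_le _ (Finset.mem_univ i)
    refine ⟨w i₁ / v i₁, ?_⟩
    set z : Fin n → ℝ := w - (w i₁ / v i₁) • v with hzdef
    have hznn : ∀ i, 0 ≤ z i := by
      intro i
      have h2 : (w i₁ / v i₁) * v i ≤ w i := by
        rw [← le_div_iff₀ (hvpos i)]
        exact hcle i
      simp only [hzdef, Pi.sub_apply, Pi.smul_apply, smul_eq_mul]
      linarith
    have hzeig : M *ᵥ z = μ • z := by
      rw [hzdef, mulVec_sub, mulVec_smul, hw, hveig, smul_sub, smul_comm]
    have hzi₁ : z i₁ = 0 := by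
      simp only [hzdef, Pi.sub_apply, Pi.smul_apply, smul_eq_mul]
      rw [div_mul_cancel₀ _ (ne_of_gt (hvpos i₁)), sub_self]
    have hz0 : z = 0 := pf_propagate W hnonneg hconn c μ z hzeig hznn i₁ hzi₁
    have h3 : w - (w i₁ / v i₁) • v = 0 := hz0
    rw [sub_eq_zero] at h3
    exact h3
  -- assemble the result
  refine ⟨μ, v, hveig, hvpos, ?_, ?_⟩
  · -- μ is the smallest eigenvalue
    intro μ' w hwne hweig
    have hww : 0 < w ⬝ᵥ w := by
      rcases lt_or_eq_of_le (Finset.sum_nonneg fun j _ => mul_self_nonneg (w j)) with h | h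
      · exact h
      · exact absurd (dotProduct_self_eq_zero.mp h.symm) hwne
    have h1 : q w = μ' * (w ⬝ᵥ w) := by
      show w ⬝ᵥ (M *ᵥ w) = _
      rw [hweig, dotProduct_smul, smul_eq_mul]
    have h2 := hlow w
    rw [h1] at h2
    exact le_of_mul_le_mul_right (by linarith) hww
  · -- simplicity
    intro w hweig
    by_cases hw0 : w = 0
    · exact ⟨0, by rw [hw0, zero_smul]⟩
    set u : Fin n → ℝ := fun i => |w i| with hudef
    have huu : u ⬝ᵥ u = w ⬝ᵥ w := by
      show (∑ i, |w i| * |w i|) = ∑ i, w i * w i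
      simp_rw [abs_mul_abs_self]
    have hqw : q w = μ * (w ⬝ᵥ w) := by
      show w ⬝ᵥ (M *ᵥ w) = _
      rw [hweig, dotProduct_smul, smul_eq_mul]
    have hqu : q u = μ * (u ⬝ᵥ u) := by
      refine le_antisymm ?_ (hlow u)
      calc q u ≤ q w := pf_quad_abs W hnonneg c w
        _ = μ * (w ⬝ᵥ w) := hqw
        _ = μ * (u ⬝ᵥ u) := by rw [huu]
    have hueig : M *ᵥ u = μ • u := heig u hqu
    -- w = u or w = -u
    have hkey : w = u ∨ w = fun i => -u i := by
      by_cases hp : (u + w) = 0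
      · right
        funext i
        have := congrFun hp i
        simp only [Pi.add_apply, Pi.zero_apply] at this
        linarith
      by_cases hm : (u - w) = 0
      · left
        funext i
        have := congrFun hm i
        simp only [Pi.sub_apply, Pi.zero_apply] at this
        linarith
      exfalso
      have hpeig : M *ᵥ (u + w) = μ • (u + w) := by
        rw [mulVec_add, hueig, hweig, smul_add]
      have hmeig : M *ᵥ (u - w) = μ • (u - w) := by
        rw [mulVec_sub, hueig, hweig, smul_sub]
      have hpnn : ∀ i, 0 ≤ (u + w) i := by
        intro i
        simp only [Pi.add_apply, hudef]
        have := neg_abs_le (w i)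
        linarith
      have hmnn : ∀ i, 0 ≤ (u - w) i := by
        intro i
        simp only [Pi.sub_apply, hudef]
        have := le_abs_self (w i)
        linarith
      have hppos := hposall (u + w) hpeig hpnn hp i0
      have hmpos := hposall (u - w) hmeig hmnn hm i0
      simp only [Pi.add_apply, Pi.sub_apply, hudef] at hppos hmpos
      have : |w i0| < |w i0| := abs_lt.mpr ⟨by linarith, by linarith⟩
      exact lt_irrefl _ this
    obtain ⟨cc, hcu⟩ := hratio u hueig (fun i => abs_nonneg _)
    rcases hkey with h | h
    · exact ⟨cc, by rw [h]; exact hcu⟩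
    · refine ⟨-cc, ?_⟩
      funext i
      have h1 := congrFun h i
      have h2 := congrFun hcu i
      simp only [Pi.smul_apply, smul_eq_mul] at h2 ⊢
      rw [h1, h2]
      ring
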